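/- Let q be a prime power, 1 ≤ k < n, and let C be a systematic (n,k,q) code with associated functions f_1,...,f_{n-k}. With W_t and Δ_k as above, and A_i denoting the number of unordered pairs of distinct codewords at Hamming distance exactly i, we have for 1 ≤ t ≤ n: Σ_{i=1}^{t-1} A_i = (|W_t| - |Δ_k|)/2, and hence A_t = (|W_{t+1}| - |W_t|)/2 for 1 ≤ t ≤ n-1. -/

import Mathlib

def cw (F : Type) [Field F] (n k : ℕ) (f : Fin (n - k) → (Fin k → F) → F)
    (a : Fin k → F) : Fin n → F :=
  fun j => if h : (j : ℕ) < k then a ⟨j, h⟩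
    else f ⟨(j : ℕ) - k, by have := j.isLt; omega⟩ a

/-- `W t`: pairs of messages `(a, ã)` such that every squarefree monomial of degree `t`
in `n` variables vanishes at the difference vector of the corresponding codewords. -/
def W (F : Type) [Field F] (n k : ℕ) (f : Fin (n - k) → (Fin k → F) → F) (t : ℕ) :
    Set ((Fin k → F) × (Fin k → F)) :=
  {p | ∀ s : Finset (Fin n), s.card = t →
    ∏ j ∈ s, (cw F n k f p.1 j - cw F n k f p.2 j) = 0}

/-- The diagonal `Δ_k`. -/
def diag (F : Type) [Field F] (k : ℕ) : Set ((Fin k → F) × (Fin k → F)) :=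
  {p | p.1 = p.2}

/-- `A i`: the number of unordered pairs of distinct codewords at Hamming distance `i`. -/
noncomputable def A (F : Type) [Field F] [Fintype F] [DecidableEq F] (n k : ℕ)
    (f : Fin (n - k) → (Fin k → F) → F) (i : ℕ) : ℕ :=
  Nat.card {s : Sym2 (Fin n → F) //
    ∃ c₁ ∈ Set.range (cw F n k f), ∃ c₂ ∈ Set.range (cw F n k f),
      c₁ ≠ c₂ ∧ hammingDist c₁ c₂ = i ∧ s = s(c₁, c₂)}

section Aux

variable (F : Type) [Field F] [Fintype F] [DecidableEq F] (n k : ℕ)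
  (f : Fin (n - k) → (Fin k → F) → F)

lemma nat_card_subtype {α : Type*} [Fintype α] (P : α → Prop) [DecidablePred P] :
    Nat.card {x // P x} = (Finset.univ.filter P).card := by
  simp [Nat.card_eq_fintype_card, Fintype.card_subtype]

lemma cw_inj (hkn : k ≤ n) : Function.Injective (cw F n k f) := by
  intro a b h
  funext i
  have := congrFun h ⟨i, lt_of_lt_of_le i.isLt hkn⟩
  simpa [cw, i.isLt] using this

lemma mem_W_iff (t : ℕ) (p : (Fin k → F) × (Fin k → F)) :
    p ∈ W F n k f t ↔ hammingDist (cw F n k f p.1) (cw F n k f p.2) < t := by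
  constructor
  · intro h
    by_contra hlt
    push_neg at hlt
    obtain ⟨s, hs, hcard⟩ := Finset.exists_subset_card_eq (s :=
      ({i | cw F n k f p.1 i ≠ cw F n k f p.2 i} : Finset (Fin n))) hlt
    have hzero := h s hcard
    have : ∏ j ∈ s, (cw F n k f p.1 j - cw F n k f p.2 j) ≠ 0 := by
      rw [Finset.prod_ne_zero_iff]
      intro j hj
      have := hs hj
      simp only [Finset.mem_filter] at this
      exact sub_ne_zero_of_ne this.2
    exact this hzero
  · intro h s hscard
    have hex : ∃ j ∈ s, cw F n k f p.1 j = cw F n k f p.2 j := by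
      by_contra hc
      push_neg at hc
      have hsub : s ⊆ ({i | cw F n k f p.1 i ≠ cw F n k f p.2 i} : Finset (Fin n)) := by
        intro j hj
        simp only [Finset.mem_filter, Finset.mem_univ, true_and]
        exact hc j hj
      have := Finset.card_le_card hsub
      unfold hammingDist at h
      omega
    obtain ⟨j, hj, he⟩ := hex
    exact Finset.prod_eq_zero hj (by rw [he, sub_self])

/-- The number of ordered pairs of messages at codeword Hamming distance `i`. -/
def cnt (i : ℕ) : ℕ :=
  (Finset.univ.filter fun p : (Fin k → F) × (Fin k → F) =>
    hammingDist (cw F n k f p.1) (cw F n k f p.2) = i).card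

lemma cardW (t : ℕ) :
    Nat.card (W F n k f t) = ∑ i ∈ Finset.range t, cnt F n k f i := by
  classical
  have hW : W F n k f t
      = {p | hammingDist (cw F n k f p.1) (cw F n k f p.2) < t} :=
    Set.ext fun p => mem_W_iff F n k f t p
  rw [hW]
  rw [show (Nat.card ↥{p : (Fin k → F) × (Fin k → F) |
        hammingDist (cw F n k f p.1) (cw F n k f p.2) < t})
      = (Finset.univ.filter fun p : (Fin k → F) × (Fin k → F) =>
        hammingDist (cw F n k f p.1) (cw F n k f p.2) < t).card from
    nat_card_subtype _]
  rw [Finset.card_eq_sum_card_fiberwise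
    (f := fun p : (Fin k → F) × (Fin k → F) =>
      hammingDist (cw F n k f p.1) (cw F n k f p.2))
    (t := Finset.range t)
    (fun p hp => by simpa using (Finset.mem_filter.mp hp).2)]
  refine Finset.sum_congr rfl fun i hi => ?_
  rw [Finset.filter_filter]
  unfold cnt
  congr 1
  apply Finset.filter_congr
  intro p _
  simp only [Finset.mem_range] at hi
  constructor
  · exact fun h => h.2
  · exact fun h => ⟨h ▸ hi, h⟩

lemma cnt0 (hkn : k ≤ n) : cnt F n k f 0 = Nat.card (diag F k) := by
  classical
  have hd : diag F k = {p : (Fin k → F) × (Fin k → F) | p.1 = p.2} := rfl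
  rw [hd, show (Nat.card ↥{p : (Fin k → F) × (Fin k → F) | p.1 = p.2})
      = (Finset.univ.filter fun p : (Fin k → F) × (Fin k → F) => p.1 = p.2).card from
    nat_card_subtype _]
  unfold cnt
  congr 1
  apply Finset.filter_congr
  intro p _
  simp only [hammingDist_eq_zero]
  exact ⟨fun h => cw_inj F n k f hkn h, fun h => by rw [h]⟩

lemma cnt2A (hkn : k ≤ n) (i : ℕ) (hi : 1 ≤ i) :
    cnt F n k f i = 2 * A F n k f i := by
  classical
  have hA : A F n k f i = (Finset.univ.filter fun s : Sym2 (Fin n → F) =>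
      ∃ c₁ ∈ Set.range (cw F n k f), ∃ c₂ ∈ Set.range (cw F n k f),
        c₁ ≠ c₂ ∧ hammingDist c₁ c₂ = i ∧ s = s(c₁, c₂)).card :=
    nat_card_subtype _
  unfold cnt
  rw [hA]
  rw [Finset.card_eq_sum_card_fiberwise
    (f := fun p : (Fin k → F) × (Fin k → F) => s(cw F n k f p.1, cw F n k f p.2))
    (t := Finset.univ.filter fun s : Sym2 (Fin n → F) =>
      ∃ c₁ ∈ Set.range (cw F n k f), ∃ c₂ ∈ Set.range (cw F n k f),
        c₁ ≠ c₂ ∧ hammingDist c₁ c₂ = i ∧ s = s(c₁, c₂))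
    (fun p hp => by
      simp only [Finset.mem_coe, Finset.mem_filter, Finset.mem_univ, true_and] at hp ⊢
      refine ⟨cw F n k f p.1, ⟨p.1, rfl⟩, cw F n k f p.2, ⟨p.2, rfl⟩, ?_, hp, rfl⟩
      intro he
      rw [← hammingDist_eq_zero] at he
      omega)]
  rw [Finset.sum_congr rfl (g := fun _ => 2) ?_, Finset.sum_const, smul_eq_mul,
    Nat.mul_comm]
  intro s hs
  simp only [Finset.mem_filter, Finset.mem_univ, true_and] at hs
  obtain ⟨c₁, ⟨a, rfl⟩, c₂, ⟨b, rfl⟩, hne, hdist, rfl⟩ := hs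
  have hab : a ≠ b := fun h => hne (by rw [h])
  have hfib : (Finset.univ.filter fun p : (Fin k → F) × (Fin k → F) =>
        hammingDist (cw F n k f p.1) (cw F n k f p.2) = i).filter
      (fun p => s(cw F n k f p.1, cw F n k f p.2) = s(cw F n k f a, cw F n k f b))
      = {(a, b), (b, a)} := by
    ext p
    simp only [Finset.mem_filter, Finset.mem_univ, true_and, Finset.mem_insert,
      Finset.mem_singleton]
    constructor
    · rintro ⟨-, hsym⟩
      rw [Sym2.eq_iff] at hsym
      rcases hsym with ⟨h1, h2⟩ | ⟨h1, h2⟩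
      · left
        have e1 := cw_inj F n k f hkn h1
        have e2 := cw_inj F n k f hkn h2
        exact Prod.ext e1 e2
      · right
        have e1 := cw_inj F n k f hkn h1
        have e2 := cw_inj F n k f hkn h2
        exact Prod.ext e1 e2
    · rintro (rfl | rfl)
      · exact ⟨hdist, rfl⟩
      · refine ⟨by rw [hammingDist_comm]; exact hdist, ?_⟩
        rw [Sym2.eq_iff]
        right; exact ⟨rfl, rfl⟩
  rw [hfib]
  rw [Finset.card_insert_of_notMem (by
    simp only [Finset.mem_singleton, Prod.mk.injEq]
    intro ⟨h1, h2⟩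
    exact hab h1), Finset.card_singleton]

end Aux

theorem stmt12 (F : Type) [Field F] [Fintype F] [DecidableEq F] (n k : ℕ)
    (hk : 1 ≤ k) (hkn : k < n) (f : Fin (n - k) → (Fin k → F) → F) :
    (∀ t : ℕ, 1 ≤ t → t ≤ n →
      ∑ i ∈ Finset.Icc 1 (t - 1), A F n k f i =
        (Nat.card (W F n k f t) - Nat.card (diag F k)) / 2) ∧
    (∀ t : ℕ, 1 ≤ t → t ≤ n - 1 →
      A F n k f t =
        (Nat.card (W F n k f (t + 1)) - Nat.card (W F n k f t)) / 2) := by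
  have hkn' : k ≤ n := le_of_lt hkn
  constructor
  · intro t ht htn
    have h1 := cardW F n k f t
    have h0 := cnt0 F n k f hkn'
    have hsplit : ∑ i ∈ Finset.range t, cnt F n k f i
        = cnt F n k f 0 + ∑ i ∈ Finset.Icc 1 (t - 1), cnt F n k f i := by
      have hr : Finset.range t = insert 0 (Finset.Icc 1 (t - 1)) := by
        ext x
        simp only [Finset.mem_range, Finset.mem_insert, Finset.mem_Icc]
        omega
      rw [hr, Finset.sum_insert (by simp)]
    have h2 : ∑ i ∈ Finset.Icc 1 (t - 1), cnt F n k f i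
        = 2 * ∑ i ∈ Finset.Icc 1 (t - 1), A F n k f i := by
      rw [Finset.mul_sum]
      exact Finset.sum_congr rfl fun i hi =>
        cnt2A F n k f hkn' i (Finset.mem_Icc.mp hi).1
    omega
  · intro t ht htn
    have h1 := cardW F n k f t
    have h2 := cardW F n k f (t + 1)
    have h3 := cnt2A F n k f hkn' t ht
    rw [Finset.sum_range_succ] at h2
    omega
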